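/- Let n ≥ 1, let q ∈ ℝ, and let t ∈ ℝ with t ≠ 0 and t ≠ 1. For every partition λ = (λ_1,…,λ_ℓ) with positive parts, in the field of fractions of ℝ[x_1,…,x_n] one has D¹_{q,t} p_λ = ((t^n−1)/(t−1))·p_λ + (t^n/(t−1))·Σ_{∅≠J⊆{1,…,ℓ}} (∏_{j∈J}(q^{λ_j}−1))·p_{λ_{J^c}}·( Σ_{μ⊢r_J} (1/z_μ)·(∏_{m=1}^{ℓ(μ)}(1−t^{−μ_m}))·p_μ ), where the outer sum is over nonempty subsets J of {1,…,ℓ}, r_J = Σ_{j∈J} λ_j, λ_{J^c} is the partition with parts λ_j for j ∉ J, and the inner sum is over all partitions μ of r_J. -/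

import Mathlib

open Finset MvPolynomial

/-- `z_μ = ∏_i i^{a_i(μ)} a_i(μ)!` for a multiset of parts. -/
def zWeight (m : Multiset ℕ) : ℕ :=
  ∏ i ∈ m.toFinset, i ^ m.count i * (m.count i).factorial

lemma zWeight_zero : zWeight 0 = 1 := by simp [zWeight]

lemma zWeight_cons (k : ℕ) (s : Multiset ℕ) :
    zWeight (k ::ₘ s) = (k * (s.count k + 1)) * zWeight s := by
  classical
  unfold zWeight
  by_cases hk : k ∈ s.toFinset
  · rw [Multiset.toFinset_cons, Finset.insert_eq_self.2 hk]
    rw [← Finset.mul_prod_erase _ _ hk, ← Finset.mul_prod_erase _ (fun i => i ^ s.count i * (s.count i).factorial) hk]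
    have h2 : ∏ i ∈ s.toFinset.erase k, i ^ (k ::ₘ s).count i * ((k ::ₘ s).count i).factorial
        = ∏ i ∈ s.toFinset.erase k, i ^ s.count i * (s.count i).factorial := by
      refine Finset.prod_congr rfl fun i hi => ?_
      rw [Multiset.count_cons_of_ne (Finset.ne_of_mem_erase hi)]
    rw [h2, Multiset.count_cons_self, Nat.factorial_succ, pow_succ]
    ring
  · rw [Multiset.toFinset_cons, Finset.prod_insert hk]
    have hns : k ∉ s := fun h => hk (Multiset.mem_toFinset.2 h)
    have hc0 : s.count k = 0 := Multiset.count_eq_zero.2 hns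
    have h2 : ∏ i ∈ s.toFinset, i ^ (k ::ₘ s).count i * ((k ::ₘ s).count i).factorial
        = ∏ i ∈ s.toFinset, i ^ s.count i * (s.count i).factorial := by
      refine Finset.prod_congr rfl fun i hi => ?_
      rw [Multiset.count_cons_of_ne]
      intro h; exact hns (h ▸ Multiset.mem_toFinset.1 hi)
    rw [h2, Multiset.count_cons_self, hc0]
    simp

lemma zWeight_pos (s : Multiset ℕ) (h : ∀ i ∈ s, 0 < i) : 0 < zWeight s := by
  unfold zWeight
  refine Finset.prod_pos fun i hi => ?_
  have := h i (Multiset.mem_toFinset.1 hi)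
  positivity

lemma msum_eq (s : Multiset ℕ) : s.sum = ∑ a ∈ s.toFinset, s.count a * a := by
  conv_lhs => rw [← Multiset.toFinset_sum_count_nsmul_eq s]
  rw [← Multiset.coe_sumAddMonoidHom, map_sum]
  simp [Multiset.coe_sumAddMonoidHom, Multiset.sum_nsmul]

section E

variable {K : Type*} [Field K] [CharZero K]

noncomputable def Ez (w : ℕ → K) (r : ℕ) : K :=
  ∑ μ : Nat.Partition r, ((zWeight μ.parts : K))⁻¹ * (μ.parts.map w).prod

lemma partition_zero_parts (μ : Nat.Partition 0) : μ.parts = 0 := by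
  refine Multiset.eq_zero_of_forall_notMem fun a ha => ?_
  have h1 := μ.parts_pos ha
  have h2 : a ≤ μ.parts.sum := Multiset.single_le_sum (fun x _ => Nat.zero_le x) a ha
  rw [μ.parts_sum] at h2
  omega

lemma Ez_zero (w : ℕ → K) : Ez w 0 = 1 := by
  rw [Ez, Fintype.sum_unique, partition_zero_parts, zWeight_zero]
  simp

lemma zWeight_cast_ne {r : ℕ} (μ : Nat.Partition r) : ((zWeight μ.parts : K)) ≠ 0 :=
  Nat.cast_ne_zero.2 (zWeight_pos _ fun _ hi => μ.parts_pos hi).ne'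

lemma Ez_rec (w : ℕ → K) (r : ℕ) :
    (r : K) * Ez w r = ∑ k ∈ Icc 1 r, w k * Ez w (r - k) := by
  classical
  rw [Ez, Finset.mul_sum]
  have step1 : ∀ μ : Nat.Partition r,
      (r : K) * (((zWeight μ.parts : K))⁻¹ * (μ.parts.map w).prod)
      = ∑ k ∈ Icc 1 r, (μ.parts.count k * k : K) *
          (((zWeight μ.parts : K))⁻¹ * (μ.parts.map w).prod) := by
    intro μ
    rw [← Finset.sum_mul]
    congr 1
    have hsub : μ.parts.toFinset ⊆ Icc 1 r := by
      intro i hi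
      have hmem := Multiset.mem_toFinset.1 hi
      have h1 := μ.parts_pos hmem
      have h2 : i ≤ μ.parts.sum := Multiset.single_le_sum (fun x _ => Nat.zero_le x) i hmem
      rw [μ.parts_sum] at h2
      exact Finset.mem_Icc.2 ⟨h1, h2⟩
    have hms : μ.parts.sum = ∑ k ∈ Icc 1 r, μ.parts.count k * k := by
      rw [msum_eq]
      refine Finset.sum_subset hsub fun k _ hk => ?_
      rw [Multiset.count_eq_zero.2 (fun h => hk (Multiset.mem_toFinset.2 h))]
      ring
    have h0 : (r : ℕ) = ∑ k ∈ Icc 1 r, μ.parts.count k * k := by rw [← hms, μ.parts_sum]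
    have h1 : ((r : ℕ) : K) = ((∑ k ∈ Icc 1 r, μ.parts.count k * k : ℕ) : K) := by rw [← h0]
    push_cast at h1
    exact h1
  rw [Finset.sum_congr rfl fun μ _ => step1 μ, Finset.sum_comm]
  refine Finset.sum_congr rfl fun k hk => ?_
  obtain ⟨hk1, hkr⟩ := Finset.mem_Icc.1 hk
  rw [Ez, Finset.mul_sum]
  rw [← Finset.sum_filter_of_ne
    (p := fun μ : Nat.Partition r => k ∈ μ.parts) (fun μ _ hne => by
      by_contra hmem
      exact hne (by rw [Multiset.count_eq_zero.2 hmem]; push_cast; ring))]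
  refine Finset.sum_bij'
    (fun (μ : Nat.Partition r) (hμ : μ ∈ univ.filter fun μ => k ∈ μ.parts) =>
      (⟨μ.parts.erase k, fun {i} hi => μ.parts_pos (Multiset.mem_of_mem_erase hi), by
        have hkμ : k ∈ μ.parts := (Finset.mem_filter.1 hμ).2
        have hce := Multiset.cons_erase hkμ
        have h2 : (k ::ₘ μ.parts.erase k).sum = μ.parts.sum := congrArg Multiset.sum hce
        rw [Multiset.sum_cons, μ.parts_sum] at h2
        omega⟩ : Nat.Partition (r - k)))
    (fun (ν : Nat.Partition (r - k)) _ =>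
      (⟨k ::ₘ ν.parts, fun {i} hi => by
        rcases Multiset.mem_cons.1 hi with h | h
        · omega
        · exact ν.parts_pos h, by rw [Multiset.sum_cons, ν.parts_sum]; omega⟩ : Nat.Partition r))
    (fun μ hμ => Finset.mem_univ _)
    (fun ν hν => Finset.mem_filter.2 ⟨Finset.mem_univ _, Multiset.mem_cons_self _ _⟩)
    (fun μ hμ => by
      ext1
      exact Multiset.cons_erase (Finset.mem_filter.1 hμ).2)
    (fun ν hν => by
      ext1
      exact Multiset.erase_cons_head _ _)
    (fun μ hμ => by
      have hkμ : k ∈ μ.parts := (Finset.mem_filter.1 hμ).2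
      set ν : Multiset ℕ := μ.parts.erase k with hν
      have hμν : μ.parts = k ::ₘ ν := (Multiset.cons_erase hkμ).symm
      dsimp only
      rw [hμν, Multiset.erase_cons_head, Multiset.count_cons_self, zWeight_cons, Multiset.map_cons, Multiset.prod_cons]
      have hz : ((zWeight ν : K)) ≠ 0 := by
        refine Nat.cast_ne_zero.2 (zWeight_pos _ fun i hi => ?_).ne'
        exact μ.parts_pos (hμν ▸ Multiset.mem_cons_of_mem hi)
      have hk0 : (k : K) ≠ 0 := Nat.cast_ne_zero.2 (by omega)
      have hc1 : ((ν.count k : K) + 1) ≠ 0 := by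
        have : ((ν.count k + 1 : ℕ) : K) ≠ 0 := Nat.cast_ne_zero.2 (Nat.succ_ne_zero _)
        push_cast at this; exact this
      push_cast
      field_simp)

section Abs
variable {K : Type*} [Field K] {n : ℕ} (t : K) (x : Fin n → K)

noncomputable def Aabs (i : Fin n) : K :=
  ∏ j ∈ Finset.univ.erase i, (t * x i - x j) / (x i - x j)

open Polynomial

noncomputable def Bip (i : Fin n) : K[X] :=
  ∏ j ∈ Finset.univ.erase i, (1 - Polynomial.C (x j) * Polynomial.X)

lemma deg_prod_le {ι : Type*} (s : Finset ι) (f : ι → K[X])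
    (h : ∀ i ∈ s, (f i).degree ≤ 1) : (∏ i ∈ s, f i).degree ≤ (#s : ℕ) := by
  classical
  induction s using Finset.cons_induction with
  | empty => simp
  | cons a s ha ih =>
    rw [Finset.prod_cons, Finset.card_cons]
    refine (degree_mul_le _ _).trans ?_
    have h1 : (f a).degree ≤ 1 := h a (Finset.mem_cons_self _ _)
    have h2 := ih fun i hi => h i (Finset.mem_cons_of_mem hi)
    calc (f a).degree + (∏ i ∈ s, f i).degree ≤ 1 + (#s : ℕ) := add_le_add h1 h2
      _ = ((#s + 1 : ℕ) : WithBot ℕ) := by push_cast; ring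
      _ = _ := by norm_cast

lemma deg_aff_le (a b : K) : (Polynomial.C a - Polynomial.C b * Polynomial.X).degree ≤ 1 := by
  refine (degree_sub_le _ _).trans ?_
  refine max_le (degree_C_le.trans ?_) ((degree_mul_le _ _).trans ?_)
  · exact by norm_num
  · calc (Polynomial.C b).degree + (Polynomial.X : K[X]).degree ≤ 0 + 1 :=
        add_le_add degree_C_le degree_X_le
      _ = 1 := by norm_num

lemma deg_aff_le' (b : K) : ((1 : K[X]) - Polynomial.C b * Polynomial.X).degree ≤ 1 := by
  have h : (1 : K[X]) - Polynomial.C b * Polynomial.X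
      = Polynomial.C 1 - Polynomial.C b * Polynomial.X := by rw [map_one]
  rw [h]; exact deg_aff_le 1 b

lemma evalkey (hx : Function.Injective x) (hx0 : ∀ i, x i ≠ 0) (i : Fin n) :
    ∏ j, (t - x j * (x i)⁻¹) =
      (t - 1) * (Aabs t x i * x i) *
        ((x i)⁻¹ * ∏ j ∈ univ.erase i, (1 - x j * (x i)⁻¹)) := by
  have hxi := hx0 i
  rw [← Finset.mul_prod_erase univ _ (mem_univ i), mul_inv_cancel₀ hxi]
  have h : ∏ j ∈ univ.erase i, (t - x j * (x i)⁻¹) =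
      (∏ j ∈ univ.erase i, (t * x i - x j) / (x i - x j)) *
        ∏ j ∈ univ.erase i, (1 - x j * (x i)⁻¹) := by
    rw [← Finset.prod_mul_distrib]
    refine Finset.prod_congr rfl fun j hj => ?_
    have hij : x i - x j ≠ 0 := sub_ne_zero.2 (hx.ne (Finset.ne_of_mem_erase hj).symm)
    field_simp
  rw [Aabs, h]
  have h2 : (t - 1) * ((∏ j ∈ univ.erase i, (t * x i - x j) / (x i - x j)) * x i) *
      ((x i)⁻¹ * ∏ j ∈ univ.erase i, (1 - x j * (x i)⁻¹))
      = (x i * (x i)⁻¹) * ((t - 1) * ((∏ j ∈ univ.erase i, (t * x i - x j) / (x i - x j)) *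
          ∏ j ∈ univ.erase i, (1 - x j * (x i)⁻¹))) := by ring
  rw [h2, mul_inv_cancel₀ hxi, one_mul]


theorem star (hx : Function.Injective x) (hx0 : ∀ i, x i ≠ 0) :
    ∏ j, (Polynomial.C t - Polynomial.C (x j) * Polynomial.X) =
      Polynomial.C (t ^ n) * ∏ j, (1 - Polynomial.C (x j) * Polynomial.X) +
      ∑ i, Polynomial.C ((t - 1) * (Aabs t x i * x i)) * (Polynomial.X * Bip x i) := by
  classical
  set s : Finset K := insert 0 (univ.image fun i => (x i)⁻¹) with hs
  have hinj : Function.Injective fun i => (x i)⁻¹ := fun a b h => hx (inv_injective h)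
  have hcard : #s = n + 1 := by
    rw [hs, Finset.card_insert_of_notMem, Finset.card_image_of_injective _ hinj, card_univ,
      Fintype.card_fin]
    intro hmem
    obtain ⟨i, _, hi⟩ := Finset.mem_image.1 hmem
    exact hx0 i (inv_eq_zero.1 hi)
  refine Polynomial.eq_of_degree_sub_lt_of_eval_finset_eq s ?_ ?_
  · have hf : (∏ j, (Polynomial.C t - Polynomial.C (x j) * Polynomial.X)).degree ≤ (n : WithBot ℕ) := by
      have := deg_prod_le (univ : Finset (Fin n))
        (fun j => Polynomial.C t - Polynomial.C (x j) * Polynomial.X)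
        (fun j _ => deg_aff_le t (x j))
      simpa using this
    have hB : (Polynomial.C (t ^ n) * ∏ j, (1 - Polynomial.C (x j) * Polynomial.X)).degree
        ≤ (n : WithBot ℕ) := by
      refine (Polynomial.degree_mul_le _ _).trans ?_
      have h2 : (∏ j, ((1 : K[X]) - Polynomial.C (x j) * Polynomial.X)).degree ≤ (n : WithBot ℕ) := by
        have := deg_prod_le (univ : Finset (Fin n))
          (fun j => (1 : K[X]) - Polynomial.C (x j) * Polynomial.X)
          (fun j _ => deg_aff_le' (x j))
        simpa using this
      calc (Polynomial.C (t ^ n)).degree + _ ≤ 0 + (n : WithBot ℕ) :=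
            add_le_add Polynomial.degree_C_le h2
        _ = (n : WithBot ℕ) := by rw [zero_add]
    have hterm : ∀ i : Fin n,
        (Polynomial.C ((t - 1) * (Aabs t x i * x i)) * (Polynomial.X * Bip x i)).degree
          ≤ (n : WithBot ℕ) := by
      intro i
      have hn1 : 1 ≤ n := Nat.one_le_iff_ne_zero.2 (by rintro rfl; exact i.elim0)
      obtain ⟨m, hm⟩ : ∃ m, n = m + 1 := ⟨n - 1, by omega⟩
      have hBi : (Bip x i).degree ≤ ((n - 1 : ℕ) : WithBot ℕ) := by
        have := deg_prod_le (univ.erase i)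
          (fun j => (1 : K[X]) - Polynomial.C (x j) * Polynomial.X)
          (fun j _ => deg_aff_le' (x j))
        rwa [Finset.card_erase_of_mem (mem_univ i), card_univ, Fintype.card_fin] at this
      refine (Polynomial.degree_mul_le _ _).trans ?_
      refine le_trans (add_le_add Polynomial.degree_C_le ((Polynomial.degree_mul_le _ _).trans
        (add_le_add Polynomial.degree_X_le hBi))) ?_
      rw [zero_add]
      subst hm
      simp only [Nat.add_sub_cancel]
      exact le_of_eq (by push_cast; ring)
    have hsum : (∑ i, Polynomial.C ((t - 1) * (Aabs t x i * x i)) *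
        (Polynomial.X * Bip x i)).degree ≤ (n : WithBot ℕ) :=
      (Polynomial.degree_sum_le _ _).trans (Finset.sup_le fun i _ => hterm i)
    have hfg := (Polynomial.degree_sub_le _ _).trans
      (max_le hf ((Polynomial.degree_add_le _ _).trans (max_le hB hsum)))
    calc _ ≤ (n : WithBot ℕ) := hfg
      _ < ((n + 1 : ℕ) : WithBot ℕ) := by exact_mod_cast Nat.lt_succ_self n
      _ = (#s : WithBot ℕ) := by rw [hcard]
  · intro y hy
    rw [hs] at hy
    rcases Finset.mem_insert.1 hy with rfl | hy
    · simp [Polynomial.eval_prod, Polynomial.eval_finset_sum]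
    · obtain ⟨i, _, rfl⟩ := Finset.mem_image.1 hy
      rw [Polynomial.eval_prod, Polynomial.eval_add, Polynomial.eval_mul,
        Polynomial.eval_finset_sum]
      simp only [Polynomial.eval_sub, Polynomial.eval_mul, Polynomial.eval_C, Polynomial.eval_X,
        Polynomial.eval_prod, Polynomial.eval_one]
      have hBzero : ∏ j, (1 - x j * (x i)⁻¹) = 0 := by
        refine Finset.prod_eq_zero (mem_univ i) ?_
        rw [mul_inv_cancel₀ (hx0 i), sub_self]
      rw [hBzero, mul_zero, zero_add]
      rw [Finset.sum_eq_single_of_mem i (mem_univ i)]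
      · rw [evalkey t x hx hx0 i, Bip, Polynomial.eval_prod]
        simp
      · intro b _ hb
        have : Polynomial.eval (x i)⁻¹ (Bip x b) = 0 := by
          rw [Bip, Polynomial.eval_prod]
          refine Finset.prod_eq_zero (Finset.mem_erase.2 ⟨hb.symm, mem_univ i⟩) ?_
          simp [mul_inv_cancel₀ (hx0 i)]
        rw [this, mul_zero, mul_zero]


lemma aff_natDegree {a b : K} (hb : b ≠ 0) :
    (Polynomial.C a - Polynomial.C b * Polynomial.X).natDegree = 1 ∧
      (Polynomial.C a - Polynomial.C b * Polynomial.X).leadingCoeff = -b := by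
  have h : Polynomial.C a - Polynomial.C b * Polynomial.X
      = Polynomial.C (-b) * Polynomial.X + Polynomial.C a := by rw [map_neg]; ring
  rw [h]
  exact ⟨Polynomial.natDegree_linear (neg_ne_zero.2 hb),
    Polynomial.leadingCoeff_linear (neg_ne_zero.2 hb)⟩

lemma aff_natDegree' {b : K} (hb : b ≠ 0) :
    ((1 : K[X]) - Polynomial.C b * Polynomial.X).natDegree = 1 ∧
      ((1 : K[X]) - Polynomial.C b * Polynomial.X).leadingCoeff = -b := by
  have h : (1 : K[X]) - Polynomial.C b * Polynomial.X
      = Polynomial.C 1 - Polynomial.C b * Polynomial.X := by rw [map_one]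
  rw [h]; exact aff_natDegree hb

lemma coeff_eq_lc {p : K[X]} {d : ℕ} (h : p.natDegree = d) : p.coeff d = p.leadingCoeff := by
  subst h; exact Polynomial.coeff_natDegree

theorem sumA (hx : Function.Injective x) (hx0 : ∀ i, x i ≠ 0) (ht1 : t ≠ 1) (hn : 1 ≤ n) :
    ∑ i, Aabs t x i = (t ^ n - 1) / (t - 1) := by
  classical
  have hstar := star t x hx hx0
  have hcoeff := congrArg (fun p : K[X] => p.coeff n) hstar
  simp only [Polynomial.finset_sum_coeff, Polynomial.coeff_add, Polynomial.coeff_C_mul] at hcoeff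
  obtain ⟨m, rfl⟩ : ∃ m, n = m + 1 := ⟨n - 1, by omega⟩
  -- coefficient of the P side
  have hP : (∏ j, (Polynomial.C t - Polynomial.C (x j) * Polynomial.X)).coeff (m + 1)
      = ∏ j, (-x j) := by
    have hne : ∀ j : Fin (m + 1), Polynomial.C t - Polynomial.C (x j) * Polynomial.X ≠ 0 := by
      intro j h
      have := (aff_natDegree (a := t) (hx0 j)).2
      rw [h] at this
      simp at this
      exact hx0 j this
    have hdeg : (∏ j, (Polynomial.C t - Polynomial.C (x j) * Polynomial.X)).natDegree = m + 1 := by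
      rw [Polynomial.natDegree_prod _ _ fun j _ => hne j]
      simp [fun j : Fin (m+1) => (aff_natDegree (a := t) (hx0 j)).1]
    rw [coeff_eq_lc hdeg, Polynomial.leadingCoeff_prod]
    exact Finset.prod_congr rfl fun j _ => (aff_natDegree (hx0 j)).2
  have hB : (∏ j, ((1 : K[X]) - Polynomial.C (x j) * Polynomial.X)).coeff (m + 1)
      = ∏ j, (-x j) := by
    have hne : ∀ j : Fin (m + 1), (1 : K[X]) - Polynomial.C (x j) * Polynomial.X ≠ 0 := by
      intro j h
      have := (aff_natDegree' (hx0 j)).2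
      rw [h] at this
      simp at this
      exact hx0 j this
    have hdeg : (∏ j, ((1 : K[X]) - Polynomial.C (x j) * Polynomial.X)).natDegree = m + 1 := by
      rw [Polynomial.natDegree_prod _ _ fun j _ => hne j]
      simp [fun j : Fin (m+1) => (aff_natDegree' (hx0 j)).1]
    rw [coeff_eq_lc hdeg, Polynomial.leadingCoeff_prod]
    exact Finset.prod_congr rfl fun j _ => (aff_natDegree' (hx0 j)).2
  have hBi : ∀ i : Fin (m + 1), (Polynomial.X * Bip x i).coeff (m + 1)
      = ∏ j ∈ univ.erase i, (-x j) := by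
    intro i
    rw [Polynomial.coeff_X_mul]
    have hne : ∀ j : Fin (m + 1), (1 : K[X]) - Polynomial.C (x j) * Polynomial.X ≠ 0 := by
      intro j h
      have := (aff_natDegree' (hx0 j)).2
      rw [h] at this
      simp at this
      exact hx0 j this
    have hdeg : (Bip x i).natDegree = m := by
      rw [Bip, Polynomial.natDegree_prod _ _ fun j _ => hne j]
      have : ∀ j ∈ univ.erase i, ((1 : K[X]) - Polynomial.C (x j) * Polynomial.X).natDegree = 1 :=
        fun j _ => (aff_natDegree' (hx0 j)).1
      rw [Finset.sum_congr rfl this]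
      simp [Finset.card_erase_of_mem]
    rw [coeff_eq_lc hdeg, Bip, Polynomial.leadingCoeff_prod]
    exact Finset.prod_congr rfl fun j _ => (aff_natDegree' (hx0 j)).2
  rw [hP, hB, Finset.sum_congr rfl fun i (_ : i ∈ univ) => by rw [hBi i]] at hcoeff
  -- now a scalar identity
  set Q : K := ∏ j, (-x j) with hQdef
  have hQ : Q ≠ 0 := Finset.prod_ne_zero_iff.2 fun j _ => neg_ne_zero.2 (hx0 j)
  have hxe : ∀ i : Fin (m + 1), x i * ∏ j ∈ univ.erase i, (-x j) = -Q := by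
    intro i
    have h1 : -x i * ∏ j ∈ univ.erase i, (-x j) = Q :=
      Finset.mul_prod_erase univ (fun j => -x j) (mem_univ i)
    have h2 : x i * ∏ j ∈ univ.erase i, (-x j)
        = -(-x i * ∏ j ∈ univ.erase i, (-x j)) := by ring
    rw [h2, h1]
  have hsum2 : ∑ i, (t - 1) * (Aabs t x i * x i) * ∏ j ∈ univ.erase i, (-x j)
      = -((t - 1) * Q * ∑ i, Aabs t x i) := by
    rw [Finset.mul_sum, ← Finset.sum_neg_distrib]
    refine Finset.sum_congr rfl fun i _ => ?_
    have := hxe i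
    calc (t - 1) * (Aabs t x i * x i) * ∏ j ∈ univ.erase i, (-x j)
        = (t - 1) * Aabs t x i * (x i * ∏ j ∈ univ.erase i, (-x j)) := by ring
      _ = (t - 1) * Aabs t x i * -Q := by rw [this]
      _ = -((t - 1) * Q * Aabs t x i) := by ring
  rw [hsum2] at hcoeff
  have ht1' : t - 1 ≠ 0 := sub_ne_zero.2 ht1
  rw [eq_div_iff ht1']
  refine mul_left_cancel₀ hQ ?_
  linear_combination hcoeff


section Series
open PowerSeries

noncomputable def geo (a : K) : K⟦X⟧ := PowerSeries.mk fun k => a ^ k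

lemma geo_inv (a : K) : ((1 : K⟦X⟧) - PowerSeries.C a * PowerSeries.X) * geo a = 1 := by
  rw [sub_mul, one_mul]
  ext k
  cases k with
  | zero =>
    simp [geo, PowerSeries.coeff_zero_eq_constantCoeff, mul_assoc]
  | succ k =>
    rw [map_sub, mul_assoc, PowerSeries.coeff_C_mul, PowerSeries.coeff_succ_X_mul]
    simp [geo, PowerSeries.coeff_one, pow_succ, mul_comm]

lemma coeff_C_X_geo (c a : K) (k : ℕ) :
    PowerSeries.coeff k (PowerSeries.C c * (PowerSeries.X * geo a))
      = if k = 0 then 0 else c * a ^ (k - 1) := by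
  rw [PowerSeries.coeff_C_mul]
  cases k with
  | zero => simp [PowerSeries.coeff_zero_eq_constantCoeff, mul_assoc]
  | succ k => rw [PowerSeries.coeff_succ_X_mul]; simp [geo]

lemma X_dgeo (a : K) : PowerSeries.X * (d⁄dX K) (geo a)
    = PowerSeries.C a * PowerSeries.X * (geo a * geo a) := by
  ext k
  cases k with
  | zero => simp [PowerSeries.coeff_zero_eq_constantCoeff, mul_assoc]
  | succ k =>
    rw [PowerSeries.coeff_succ_X_mul, PowerSeries.coeff_derivative, mul_assoc,
      PowerSeries.coeff_C_mul, PowerSeries.coeff_succ_X_mul]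
    have h1 : PowerSeries.coeff k (geo a * geo a) = (k + 1) * a ^ k := by
      rw [PowerSeries.coeff_mul]
      have h2 : ∀ p ∈ Finset.HasAntidiagonal.antidiagonal k,
          PowerSeries.coeff p.1 (geo a) * PowerSeries.coeff p.2 (geo a) = a ^ k := by
        intro p hp
        rw [geo, PowerSeries.coeff_mk, PowerSeries.coeff_mk, ← pow_add,
          Finset.HasAntidiagonal.mem_antidiagonal.1 hp]
      rw [Finset.sum_congr rfl h2, Finset.sum_const, Finset.Nat.card_antidiagonal,
        nsmul_eq_mul]
      push_cast
      ring
    rw [h1, geo, PowerSeries.coeff_mk]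
    push_cast
    ring

lemma d_one_sub (b : K) : (d⁄dX K) ((1 : K⟦X⟧) - PowerSeries.C b * PowerSeries.X)
    = -PowerSeries.C b := by
  rw [map_sub, Derivation.map_one_eq_zero, ← PowerSeries.smul_eq_C_mul, Derivation.map_smul,
    PowerSeries.derivative_X, PowerSeries.smul_eq_C_mul, mul_one, zero_sub]

lemma X_dfac (a b : K) :
    PowerSeries.X * (d⁄dX K) (((1 : K⟦X⟧) - PowerSeries.C b * PowerSeries.X) * geo a)
    = (((1 : K⟦X⟧) - PowerSeries.C b * PowerSeries.X) * geo a) *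
        (PowerSeries.C a * PowerSeries.X * geo a
          - PowerSeries.C b * PowerSeries.X * geo b) := by
  rw [Derivation.leibniz, smul_eq_mul, smul_eq_mul, d_one_sub]
  linear_combination (((1 : K⟦X⟧) - PowerSeries.C b * PowerSeries.X)) * X_dgeo a
    + (PowerSeries.C b * PowerSeries.X * geo a) * geo_inv b

lemma X_dprod {ι : Type*} (s : Finset ι) (f g : ι → K⟦X⟧)
    (h : ∀ i ∈ s, PowerSeries.X * (d⁄dX K) (f i) = f i * g i) :
    PowerSeries.X * (d⁄dX K) (∏ i ∈ s, f i) = (∏ i ∈ s, f i) * ∑ i ∈ s, g i := by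
  classical
  induction s using Finset.cons_induction with
  | empty => simp [Derivation.map_one_eq_zero]
  | cons a s ha ih =>
    rw [Finset.prod_cons, Finset.sum_cons, Derivation.leibniz, smul_eq_mul, smul_eq_mul]
    have ih' := ih fun i hi => h i (Finset.mem_cons_of_mem hi)
    have ha' := h a (Finset.mem_cons_self a s)
    linear_combination (f a) * ih' + (∏ i ∈ s, f i) * ha'

end Series

section Series2
open PowerSeries

noncomputable def Fser (t : K) (x : Fin n → K) : K⟦X⟧ :=
  (∏ j, (PowerSeries.C t - PowerSeries.C (x j) * PowerSeries.X)) * ∏ j, geo (x j)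

noncomputable def Sser (t : K) (x : Fin n → K) : K⟦X⟧ :=
  ∑ j, (PowerSeries.C (x j) * (PowerSeries.X * geo (x j))
    - PowerSeries.C (t⁻¹ * x j) * (PowerSeries.X * geo (t⁻¹ * x j)))

lemma star_series (hx : Function.Injective x) (hx0 : ∀ i, x i ≠ 0) :
    ∏ j, (PowerSeries.C t - PowerSeries.C (x j) * PowerSeries.X) =
      PowerSeries.C (t ^ n) * ∏ j, (1 - PowerSeries.C (x j) * PowerSeries.X) +
      ∑ i, PowerSeries.C ((t - 1) * (Aabs t x i * x i)) *
        (PowerSeries.X * ∏ j ∈ univ.erase i,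
          (1 - PowerSeries.C (x j) * PowerSeries.X)) := by
  have h := star t x hx hx0
  have h2 := congrArg (Polynomial.coeToPowerSeries.ringHom (R := K)) h
  simpa only [map_prod, map_sum, map_add, map_mul, map_sub, map_one, Bip,
    Polynomial.coeToPowerSeries.ringHom_apply, Polynomial.coe_C, Polynomial.coe_X] using h2

lemma Fser_eq (hx : Function.Injective x) (hx0 : ∀ i, x i ≠ 0) :
    Fser t x = PowerSeries.C (t ^ n) +
      ∑ i, PowerSeries.C ((t - 1) * (Aabs t x i * x i)) *
        (PowerSeries.X * geo (x i)) := by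
  rw [Fser, star_series t x hx hx0, add_mul, Finset.sum_mul]
  congr 1
  · rw [mul_assoc, ← Finset.prod_mul_distrib,
      Finset.prod_congr rfl fun j (_ : j ∈ univ) => geo_inv (x j)]
    simp
  · refine Finset.sum_congr rfl fun i _ => ?_
    rw [mul_assoc]
    congr 1
    have h1 : (∏ j ∈ univ.erase i, ((1:K⟦X⟧) - PowerSeries.C (x j) * PowerSeries.X)) *
        ∏ j ∈ univ.erase i, geo (x j) = 1 := by
      rw [← Finset.prod_mul_distrib,
        Finset.prod_congr rfl fun j (_ : j ∈ univ.erase i) => geo_inv (x j)]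
      simp
    rw [← Finset.mul_prod_erase univ (fun j => geo (x j)) (mem_univ i)]
    linear_combination (PowerSeries.X * geo (x i)) * h1

lemma Fser_coeff_zero (hx : Function.Injective x) (hx0 : ∀ i, x i ≠ 0) :
    PowerSeries.coeff 0 (Fser t x) = t ^ n := by
  rw [Fser_eq t x hx hx0, map_add, map_sum, PowerSeries.coeff_C]
  simp [coeff_C_X_geo]

lemma Fser_coeff_pos (hx : Function.Injective x) (hx0 : ∀ i, x i ≠ 0) (r : ℕ) (hr : 1 ≤ r) :
    PowerSeries.coeff r (Fser t x) = (t - 1) * ∑ i, Aabs t x i * x i ^ r := by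
  obtain ⟨s, rfl⟩ : ∃ s, r = s + 1 := ⟨r - 1, by omega⟩
  rw [Fser_eq t x hx hx0, map_add, map_sum, PowerSeries.coeff_C, if_neg (by omega)]
  rw [Finset.sum_congr rfl fun i (_ : i ∈ univ) => coeff_C_X_geo ((t - 1) * (Aabs t x i * x i)) (x i) (s + 1)]
  simp only [if_neg (show ¬s + 1 = 0 by omega), Nat.add_sub_cancel, zero_add, Finset.mul_sum]
  exact Finset.sum_congr rfl fun i _ => by ring


lemma Sser_coeff_zero : PowerSeries.coeff 0 (Sser t x) = 0 := by
  rw [Sser, map_sum]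
  refine Finset.sum_eq_zero fun j _ => ?_
  rw [map_sub, coeff_C_X_geo, coeff_C_X_geo]
  simp

lemma Sser_coeff (k : ℕ) (hk : 1 ≤ k) :
    PowerSeries.coeff k (Sser t x) = (1 - t⁻¹ ^ k) * ∑ j, x j ^ k := by
  obtain ⟨s, rfl⟩ : ∃ s, k = s + 1 := ⟨k - 1, by omega⟩
  rw [Sser, map_sum, Finset.mul_sum]
  refine Finset.sum_congr rfl fun j _ => ?_
  rw [map_sub, coeff_C_X_geo, coeff_C_X_geo, if_neg (show ¬s + 1 = 0 by omega),
    if_neg (show ¬s + 1 = 0 by omega)]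
  simp only [Nat.add_sub_cancel]
  rw [mul_pow]
  ring

lemma X_dFser (ht0 : t ≠ 0) :
    PowerSeries.X * (d⁄dX K) (Fser t x) = Fser t x * Sser t x := by
  have hfac : ∀ j : Fin n, (PowerSeries.C t - PowerSeries.C (x j) * PowerSeries.X)
      = PowerSeries.C t * (1 - PowerSeries.C (t⁻¹ * x j) * PowerSeries.X) := by
    intro j
    rw [mul_sub, mul_one, ← mul_assoc, ← map_mul, ← mul_assoc, mul_inv_cancel₀ ht0, one_mul]
  have key : ∀ j ∈ (univ : Finset (Fin n)),
      PowerSeries.X * (d⁄dX K) ((PowerSeries.C t - PowerSeries.C (x j) * PowerSeries.X)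
          * geo (x j))
        = ((PowerSeries.C t - PowerSeries.C (x j) * PowerSeries.X) * geo (x j)) *
          (PowerSeries.C (x j) * (PowerSeries.X * geo (x j))
            - PowerSeries.C (t⁻¹ * x j) * (PowerSeries.X * geo (t⁻¹ * x j))) := by
    intro j _
    rw [hfac j, mul_assoc, ← PowerSeries.smul_eq_C_mul, Derivation.map_smul,
      PowerSeries.smul_eq_C_mul, PowerSeries.smul_eq_C_mul]
    linear_combination (PowerSeries.C t) * X_dfac (x j) (t⁻¹ * x j)
  have h := X_dprod univ
    (fun j => (PowerSeries.C t - PowerSeries.C (x j) * PowerSeries.X) * geo (x j))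
    (fun j => PowerSeries.C (x j) * (PowerSeries.X * geo (x j))
      - PowerSeries.C (t⁻¹ * x j) * (PowerSeries.X * geo (t⁻¹ * x j))) key
  rw [Finset.prod_mul_distrib] at h
  rw [Fser, Sser]
  exact h

variable [CharZero K]

lemma Frec (ht0 : t ≠ 0) (r : ℕ) (hr : 1 ≤ r) :
    (r : K) * PowerSeries.coeff r (Fser t x)
      = ∑ k ∈ Icc 1 r, ((1 - t⁻¹ ^ k) * ∑ j, x j ^ k)
          * PowerSeries.coeff (r - k) (Fser t x) := by
  obtain ⟨s, rfl⟩ : ∃ s, r = s + 1 := ⟨r - 1, by omega⟩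
  have h := congrArg (PowerSeries.coeff (s + 1)) (X_dFser t x ht0)
  rw [PowerSeries.coeff_succ_X_mul, PowerSeries.coeff_derivative,
    mul_comm (Fser t x) (Sser t x), PowerSeries.coeff_mul,
    Finset.Nat.sum_antidiagonal_eq_sum_range_succ_mk, Finset.range_eq_Ico,
    Finset.sum_eq_sum_Ico_succ_bot (by omega : 0 < s + 1 + 1),
    Sser_coeff_zero, zero_mul, zero_add] at h
  rw [show Icc 1 (s + 1) = Ico 1 (s + 1 + 1) from (Finset.Ico_add_one_right_eq_Icc 1 (s + 1)).symm]
  rw [Finset.sum_congr rfl fun k hk =>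
    (by rw [Sser_coeff t x k (Finset.mem_Ico.1 hk).1] :
      PowerSeries.coeff k (Sser t x) * PowerSeries.coeff (s + 1 - k) (Fser t x)
        = ((1 - t⁻¹ ^ k) * ∑ j, x j ^ k) * PowerSeries.coeff (s + 1 - k) (Fser t x))] at h
  rw [← h]
  push_cast
  ring

lemma Fc_eq (hx : Function.Injective x) (hx0 : ∀ i, x i ≠ 0) (ht0 : t ≠ 0) (r : ℕ) :
    PowerSeries.coeff r (Fser t x)
      = t ^ n * Ez (fun k => (1 - t⁻¹ ^ k) * ∑ j, x j ^ k) r := by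
  induction r using Nat.strong_induction_on with
  | _ r ih =>
    match r with
    | 0 => rw [PowerSeries.coeff_zero_eq_constantCoeff_apply,
        ← PowerSeries.coeff_zero_eq_constantCoeff_apply, Fser_coeff_zero t x hx hx0,
        Ez_zero, mul_one]
    | (s + 1) =>
      have hs : (((s + 1 : ℕ)) : K) ≠ 0 := Nat.cast_ne_zero.2 (by omega)
      have h1 := Frec t x ht0 (s + 1) (by omega)
      have h2 := Ez_rec (K := K) (fun k => (1 - t⁻¹ ^ k) * ∑ j, x j ^ k) (s + 1)
      rw [Finset.sum_congr rfl (fun k hk => by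
        rw [ih ((s + 1) - k) (by
          have := (Finset.mem_Icc.1 hk).1
          omega)])] at h1
      refine mul_left_cancel₀ hs ?_
      push_cast
      push_cast at h1 h2
      rw [h1]
      calc ∑ k ∈ Icc 1 (s + 1), ((1 - t⁻¹ ^ k) * ∑ j, x j ^ k)
            * (t ^ n * Ez (fun k => (1 - t⁻¹ ^ k) * ∑ j, x j ^ k) (s + 1 - k))
          = t ^ n * ∑ k ∈ Icc 1 (s + 1), ((1 - t⁻¹ ^ k) * ∑ j, x j ^ k)
            * Ez (fun k => (1 - t⁻¹ ^ k) * ∑ j, x j ^ k) (s + 1 - k) := by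
            rw [Finset.mul_sum]
            exact Finset.sum_congr rfl fun k _ => by ring
        _ = t ^ n * (((s : K) + 1) * Ez (fun k => (1 - t⁻¹ ^ k) * ∑ j, x j ^ k) (s + 1)) := by
            rw [← h2]
        _ = ((s : K) + 1) * (t ^ n * Ez (fun k => (1 - t⁻¹ ^ k) * ∑ j, x j ^ k) (s + 1)) := by
            ring

theorem keyGr (hx : Function.Injective x) (hx0 : ∀ i, x i ≠ 0) (ht0 : t ≠ 0) (ht1 : t ≠ 1)
    (r : ℕ) (hr : 1 ≤ r) :
    ∑ i, Aabs t x i * x i ^ r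
      = t ^ n / (t - 1) * Ez (fun k => (1 - t⁻¹ ^ k) * ∑ j, x j ^ k) r := by
  have h1 := Fser_coeff_pos t x hx hx0 r hr
  have h2 := Fc_eq t x hx hx0 ht0 r
  rw [h1] at h2
  have ht1' : t - 1 ≠ 0 := sub_ne_zero.2 ht1
  rw [div_mul_eq_mul_div, eq_div_iff ht1']
  linear_combination h2

end Series2
end Abs

variable (n : ℕ)

/-- The power sum `p_r = x_1^r + ⋯ + x_n^r`. -/
noncomputable def psumP (r : ℕ) : MvPolynomial (Fin n) ℝ :=
  ∑ i : Fin n, X i ^ r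

/-- `p_μ = ∏_m p_{μ_m}` for a partition `μ` (given by its multiset of parts). -/
noncomputable def pPart {m : ℕ} (μ : Nat.Partition m) : MvPolynomial (Fin n) ℝ :=
  (μ.parts.map (psumP n)).prod

/-- The substitution `x_i ↦ q x_i` as an algebra endomorphism. -/
noncomputable def Tq (q : ℝ) (i : Fin n) :
    MvPolynomial (Fin n) ℝ →ₐ[ℝ] MvPolynomial (Fin n) ℝ :=
  aeval (fun j => if j = i then C q * X i else X j)

/-- `A_i(x;t) = ∏_{j≠i} (t x_i - x_j)/(x_i - x_j)` in the fraction field. -/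
noncomputable def AiT (t : ℝ) (i : Fin n) : FractionRing (MvPolynomial (Fin n) ℝ) :=
  ∏ j ∈ Finset.univ.erase i,
    algebraMap (MvPolynomial (Fin n) ℝ) (FractionRing (MvPolynomial (Fin n) ℝ))
        (C t * X i - X j) /
      algebraMap (MvPolynomial (Fin n) ℝ) (FractionRing (MvPolynomial (Fin n) ℝ))
        (X i - X j)

/-- The Macdonald operator `D¹_{q,t} f = Σ_i A_i(x;t) T_{q,x_i} f`, landing in the
fraction field of `ℝ[x_1,…,x_n]`. -/
noncomputable def D1 (q t : ℝ) (f : MvPolynomial (Fin n) ℝ) :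
    FractionRing (MvPolynomial (Fin n) ℝ) :=
  ∑ i : Fin n, AiT n t i *
    algebraMap (MvPolynomial (Fin n) ℝ) (FractionRing (MvPolynomial (Fin n) ℝ)) (Tq n q i f)

/-- Real scalars inside the fraction field. -/
noncomputable def cK (c : ℝ) : FractionRing (MvPolynomial (Fin n) ℝ) :=
  algebraMap (MvPolynomial (Fin n) ℝ) (FractionRing (MvPolynomial (Fin n) ℝ)) (C c)

-- Bridging lemmas

lemma algC_eq (c : ℝ) :
    algebraMap (MvPolynomial (Fin n) ℝ) (FractionRing (MvPolynomial (Fin n) ℝ)) (C c)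
      = algebraMap ℝ (FractionRing (MvPolynomial (Fin n) ℝ)) c := by
  rw [IsScalarTower.algebraMap_apply ℝ (MvPolynomial (Fin n) ℝ), algebraMap_eq]

lemma cK_eq (c : ℝ) : cK n c = algebraMap ℝ (FractionRing (MvPolynomial (Fin n) ℝ)) c :=
  algC_eq n c

lemma AiT_eq (t : ℝ) (i : Fin n) :
    AiT n t i = Aabs (algebraMap ℝ (FractionRing (MvPolynomial (Fin n) ℝ)) t)
      (fun i => algebraMap (MvPolynomial (Fin n) ℝ) (FractionRing (MvPolynomial (Fin n) ℝ))
        (X i)) i := by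
  rw [AiT, Aabs]
  refine Finset.prod_congr rfl fun j _ => ?_
  rw [map_sub, map_sub, map_mul, algC_eq]

lemma Tq_psum (q : ℝ) (i : Fin n) (r : ℕ) :
    Tq n q i (psumP n r) = psumP n r + C (q ^ r - 1) * X i ^ r := by
  classical
  rw [Tq, psumP, map_sum]
  simp only [map_pow, aeval_X]
  rw [← Finset.add_sum_erase _ _ (mem_univ i), if_pos rfl,
    Finset.sum_congr rfl (fun m hm =>
      by rw [if_neg (Finset.ne_of_mem_erase hm)] :
      ∀ m ∈ univ.erase i, ((if m = i then C q * X i else X m) ^ r 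
        = X m ^ r)),
    ← Finset.add_sum_erase _ (fun m => (X m : MvPolynomial (Fin n) ℝ) ^ r) (mem_univ i),
    mul_pow, ← map_pow, map_sub, map_one]
  ring

/-- The action of the Macdonald operator `D¹_{q,t}` on the power sums `p_λ`. -/
theorem D1_powerSum (hn : 1 ≤ n) (q t : ℝ) (ht0 : t ≠ 0) (ht1 : t ≠ 1)
    (ℓ : ℕ) (lam : Fin ℓ → ℕ) (hpos : ∀ j, 0 < lam j) (hdec : Antitone lam) :
    D1 n q t (∏ j : Fin ℓ, psumP n (lam j)) =
      cK n ((t ^ n - 1) / (t - 1)) *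
        algebraMap (MvPolynomial (Fin n) ℝ) (FractionRing (MvPolynomial (Fin n) ℝ))
          (∏ j : Fin ℓ, psumP n (lam j)) +
      cK n (t ^ n / (t - 1)) *
        ∑ J ∈ Finset.univ.powerset.filter (fun J : Finset (Fin ℓ) => J ≠ ∅),
          cK n (∏ j ∈ J, (q ^ lam j - 1)) *
            algebraMap (MvPolynomial (Fin n) ℝ) (FractionRing (MvPolynomial (Fin n) ℝ))
              (∏ j ∈ Jᶜ, psumP n (lam j)) *
            ∑ μ : Nat.Partition (∑ j ∈ J, lam j),
              cK n (((zWeight μ.parts : ℝ))⁻¹ *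
                  (μ.parts.map (fun p => 1 - t⁻¹ ^ p)).prod) *
                algebraMap (MvPolynomial (Fin n) ℝ) (FractionRing (MvPolynomial (Fin n) ℝ))
                  (pPart n μ) := by
  classical
  have hinj : Function.Injective
      (algebraMap (MvPolynomial (Fin n) ℝ) (FractionRing (MvPolynomial (Fin n) ℝ))) :=
    IsFractionRing.injective _ _
  have hxinj : Function.Injective (fun i : Fin n =>
      algebraMap (MvPolynomial (Fin n) ℝ) (FractionRing (MvPolynomial (Fin n) ℝ)) (X i)) :=
    fun a b h => X_injective (hinj h)
  have hx0 : ∀ i : Fin n,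
      algebraMap (MvPolynomial (Fin n) ℝ) (FractionRing (MvPolynomial (Fin n) ℝ)) (X i) ≠ 0 := by
    intro i h
    exact X_ne_zero (R := ℝ) i (hinj (by rw [map_zero]; exact h))
  have hψinj : Function.Injective (algebraMap ℝ (FractionRing (MvPolynomial (Fin n) ℝ))) :=
    (algebraMap ℝ (FractionRing (MvPolynomial (Fin n) ℝ))).injective
  have ht'0 : algebraMap ℝ (FractionRing (MvPolynomial (Fin n) ℝ)) t ≠ 0 :=
    fun h => ht0 (hψinj (by rw [map_zero]; exact h))
  have ht'1 : algebraMap ℝ (FractionRing (MvPolynomial (Fin n) ℝ)) t ≠ 1 :=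
    fun h => ht1 (hψinj (by rw [map_one]; exact h))
  have hTq : ∀ i : Fin n, Tq n q i (∏ j, psumP n (lam j)) =
      ∑ J ∈ univ.powerset, (C (∏ j ∈ J, (q ^ lam j - 1)) * X i ^ (∑ j ∈ J, lam j))
        * ∏ j ∈ univ \ J, psumP n (lam j) := by
    intro i
    rw [map_prod]
    rw [Finset.prod_congr rfl fun j (_ : j ∈ univ) => Tq_psum n q i (lam j)]
    rw [Finset.prod_congr rfl fun j (_ : j ∈ univ) =>
      (add_comm (psumP n (lam j)) (C (q ^ lam j - 1) * X i ^ lam j) :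
        psumP n (lam j) + C (q ^ lam j - 1) * X i ^ lam j
          = C (q ^ lam j - 1) * X i ^ lam j + psumP n (lam j))]
    rw [Finset.prod_add]
    refine Finset.sum_congr rfl fun J _ => ?_
    rw [Finset.prod_mul_distrib, map_prod, Finset.prod_pow_eq_pow_sum]
  have hD1 : D1 n q t (∏ j, psumP n (lam j)) =
      ∑ J ∈ univ.powerset, cK n (∏ j ∈ J, (q ^ lam j - 1)) *
        algebraMap (MvPolynomial (Fin n) ℝ) (FractionRing (MvPolynomial (Fin n) ℝ))
          (∏ j ∈ univ \ J, psumP n (lam j)) *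
        ∑ i, Aabs (algebraMap ℝ (FractionRing (MvPolynomial (Fin n) ℝ)) t)
            (fun i => algebraMap (MvPolynomial (Fin n) ℝ)
              (FractionRing (MvPolynomial (Fin n) ℝ)) (X i)) i *
          (algebraMap (MvPolynomial (Fin n) ℝ) (FractionRing (MvPolynomial (Fin n) ℝ))
            (X i)) ^ (∑ j ∈ J, lam j) := by
    rw [D1]
    have h1 : ∀ i : Fin n, AiT n t i *
        algebraMap (MvPolynomial (Fin n) ℝ) (FractionRing (MvPolynomial (Fin n) ℝ))
          (Tq n q i (∏ j, psumP n (lam j)))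
        = ∑ J ∈ univ.powerset,
            Aabs (algebraMap ℝ (FractionRing (MvPolynomial (Fin n) ℝ)) t)
              (fun i => algebraMap (MvPolynomial (Fin n) ℝ)
                (FractionRing (MvPolynomial (Fin n) ℝ)) (X i)) i *
            algebraMap (MvPolynomial (Fin n) ℝ) (FractionRing (MvPolynomial (Fin n) ℝ))
              ((C (∏ j ∈ J, (q ^ lam j - 1)) * X i ^ (∑ j ∈ J, lam j))
                * ∏ j ∈ univ \ J, psumP n (lam j)) := by
      intro i
      rw [hTq i, map_sum, Finset.mul_sum, AiT_eq]
    rw [Finset.sum_congr rfl fun i (_ : i ∈ univ) => h1 i, Finset.sum_comm]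
    refine Finset.sum_congr rfl fun J _ => ?_
    rw [Finset.mul_sum]
    refine Finset.sum_congr rfl fun i _ => ?_
    rw [map_mul, map_mul, map_pow, algC_eq, cK_eq]
    ring
  rw [hD1, ← Finset.sum_filter_add_sum_filter_not univ.powerset (fun J => J = ∅)]
  have hsplit : (univ.powerset.filter fun J : Finset (Fin ℓ) => J = ∅) = {∅} := by
    ext J
    simp
  rw [hsplit, Finset.sum_singleton]
  have hterm0 : cK n (∏ j ∈ (∅ : Finset (Fin ℓ)), (q ^ lam j - 1)) *
      algebraMap (MvPolynomial (Fin n) ℝ) (FractionRing (MvPolynomial (Fin n) ℝ))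
        (∏ j ∈ univ \ (∅ : Finset (Fin ℓ)), psumP n (lam j)) *
      ∑ i, Aabs (algebraMap ℝ (FractionRing (MvPolynomial (Fin n) ℝ)) t)
          (fun i => algebraMap (MvPolynomial (Fin n) ℝ)
            (FractionRing (MvPolynomial (Fin n) ℝ)) (X i)) i *
        (algebraMap (MvPolynomial (Fin n) ℝ) (FractionRing (MvPolynomial (Fin n) ℝ))
          (X i)) ^ (∑ j ∈ (∅ : Finset (Fin ℓ)), lam j)
      = cK n ((t ^ n - 1) / (t - 1)) *
        algebraMap (MvPolynomial (Fin n) ℝ) (FractionRing (MvPolynomial (Fin n) ℝ))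
          (∏ j : Fin ℓ, psumP n (lam j)) := by
    rw [Finset.prod_empty, Finset.sum_empty, Finset.sdiff_empty, cK_eq n (1 : ℝ), map_one]
    simp only [pow_zero, mul_one]
    rw [sumA (algebraMap ℝ (FractionRing (MvPolynomial (Fin n) ℝ)) t)
      (fun i => algebraMap (MvPolynomial (Fin n) ℝ)
        (FractionRing (MvPolynomial (Fin n) ℝ)) (X i)) hxinj hx0 ht'1 hn]
    rw [cK_eq]
    simp only [map_div₀, map_sub, map_pow, map_one]
    ring
  rw [hterm0]
  congr 1
  have hps : ∀ r : ℕ,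
      algebraMap (MvPolynomial (Fin n) ℝ) (FractionRing (MvPolynomial (Fin n) ℝ)) (psumP n r)
        = ∑ i, (algebraMap (MvPolynomial (Fin n) ℝ) (FractionRing (MvPolynomial (Fin n) ℝ))
            (X i)) ^ r := by
    intro r
    rw [psumP, map_sum]
    exact Finset.sum_congr rfl fun i _ => by rw [map_pow]
  have hEz : ∀ r : ℕ,
      (∑ μ : Nat.Partition r, cK n (((zWeight μ.parts : ℝ))⁻¹ *
          (μ.parts.map (fun p => 1 - t⁻¹ ^ p)).prod) *
          algebraMap (MvPolynomial (Fin n) ℝ) (FractionRing (MvPolynomial (Fin n) ℝ))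
            (pPart n μ))
        = Ez (fun k => (1 - (algebraMap ℝ (FractionRing (MvPolynomial (Fin n) ℝ)) t)⁻¹ ^ k) *
            ∑ i, (algebraMap (MvPolynomial (Fin n) ℝ)
              (FractionRing (MvPolynomial (Fin n) ℝ)) (X i)) ^ k) r := by
    intro r
    rw [Ez]
    refine Finset.sum_congr rfl fun μ _ => ?_
    rw [cK_eq, map_mul, map_inv₀, map_natCast]
    rw [map_multiset_prod (algebraMap ℝ (FractionRing (MvPolynomial (Fin n) ℝ))),
      Multiset.map_map]
    have hc1 : μ.parts.map ((algebraMap ℝ (FractionRing (MvPolynomial (Fin n) ℝ)))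
          ∘ fun p => 1 - t⁻¹ ^ p)
        = μ.parts.map (fun p =>
            1 - (algebraMap ℝ (FractionRing (MvPolynomial (Fin n) ℝ)) t)⁻¹ ^ p) :=
      Multiset.map_congr rfl fun p _ => by
        rw [Function.comp_apply, map_sub, map_one, map_pow, map_inv₀]
    rw [hc1, pPart,
      map_multiset_prod (algebraMap (MvPolynomial (Fin n) ℝ)
        (FractionRing (MvPolynomial (Fin n) ℝ))), Multiset.map_map]
    have hc2 : μ.parts.map ((algebraMap (MvPolynomial (Fin n) ℝ)
          (FractionRing (MvPolynomial (Fin n) ℝ))) ∘ psumP n)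
        = μ.parts.map (fun p => ∑ i, (algebraMap (MvPolynomial (Fin n) ℝ)
            (FractionRing (MvPolynomial (Fin n) ℝ)) (X i)) ^ p) :=
      Multiset.map_congr rfl fun p _ => by rw [Function.comp_apply, hps p]
    rw [hc2, mul_assoc]
    congr 1
    exact (Multiset.prod_map_mul).symm
  rw [Finset.mul_sum]
  refine Finset.sum_congr rfl fun J hJ => ?_
  have hJne : J ≠ ∅ := by
    simp only [Finset.mem_filter] at hJ
    exact hJ.2
  obtain ⟨j0, hj0⟩ := Finset.nonempty_iff_ne_empty.2 hJne
  have hrJ : 1 ≤ ∑ j ∈ J, lam j :=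
    le_trans (hpos j0) (Finset.single_le_sum (fun j _ => Nat.zero_le _) hj0)
  rw [keyGr (algebraMap ℝ (FractionRing (MvPolynomial (Fin n) ℝ)) t)
    (fun i => algebraMap (MvPolynomial (Fin n) ℝ)
      (FractionRing (MvPolynomial (Fin n) ℝ)) (X i)) hxinj hx0 ht'0 ht'1 _ hrJ, hEz]
  rw [Finset.compl_eq_univ_sdiff]
  rw [cK_eq n (t ^ n / (t - 1))]
  simp only [map_div₀, map_sub, map_pow, map_one]
  ring
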